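/- Let m ≥ 2 be an integer, let G : [0,∞) → ℝ be continuous with G(t) ≥ 0 for all t ≥ 0, and let h : [0,∞) → ℝ be twice continuously differentiable with h'' = G·h on [0,∞), h(0) = 0 and h'(0) = 1. Let l > 0, let u : [0,l] → ℝ be C², and let φ : (0,l] → ℝ be C¹ and satisfy the Riccati inequality φ'(t) + φ(t)²/(m−1) ≤ (m−1)·G(t) + u''(t) for every t ∈ (0,l], together with h(t)²·φ(t) → 0 as t → 0⁺. Then for every r ∈ (0,l] one has h(r)²·φ(r) ≤ (m−1)·h(r)·h'(r) + ∫₀ʳ h(t)²·u''(t) dt. -/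

import Mathlib

/- STATEMENT 0: one-variable core of the weighted Laplacian comparison
(Theorem 3.1): if h'' = G·h with h(0)=0, h'(0)=1, G ≥ 0 continuous, u is C² on
[0,l], φ is C¹ on (0,l] satisfying the Riccati inequality
φ' + φ²/(m-1) ≤ (m-1)G + u'' and h²φ → 0 as t → 0⁺, then for all r ∈ (0,l],
h(r)²·φ(r) ≤ (m-1)·h(r)·h'(r) + ∫₀ʳ h²·u''. -/
theorem stmt_0
    (m : ℕ) (hm : 2 ≤ m)
    (G h h' h'' : ℝ → ℝ)
    (hGcont : ContinuousOn G (Set.Ici 0))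
    (hGnonneg : ∀ t ≥ (0:ℝ), 0 ≤ G t)
    (hhderiv : ∀ t ∈ Set.Ici (0:ℝ), HasDerivWithinAt h (h' t) (Set.Ici 0) t)
    (hh'deriv : ∀ t ∈ Set.Ici (0:ℝ), HasDerivWithinAt h' (h'' t) (Set.Ici 0) t)
    (hh''cont : ContinuousOn h'' (Set.Ici 0))
    (hode : ∀ t ≥ (0:ℝ), h'' t = G t * h t)
    (hh0 : h 0 = 0) (hh'0 : h' 0 = 1)
    (l : ℝ) (hl : 0 < l)
    (u u' u'' : ℝ → ℝ)
    (huderiv : ∀ t ∈ Set.Icc (0:ℝ) l, HasDerivWithinAt u (u' t) (Set.Icc 0 l) t)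
    (hu'deriv : ∀ t ∈ Set.Icc (0:ℝ) l, HasDerivWithinAt u' (u'' t) (Set.Icc 0 l) t)
    (hu''cont : ContinuousOn u'' (Set.Icc 0 l))
    (φ φ' : ℝ → ℝ)
    (hφderiv : ∀ t ∈ Set.Ioc (0:ℝ) l, HasDerivWithinAt φ (φ' t) (Set.Ioc 0 l) t)
    (hφ'cont : ContinuousOn φ' (Set.Ioc 0 l))
    (hRiccati : ∀ t ∈ Set.Ioc (0:ℝ) l,
      φ' t + φ t ^ 2 / ((m : ℝ) - 1) ≤ ((m : ℝ) - 1) * G t + u'' t)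
    (hlim : Filter.Tendsto (fun t => h t ^ 2 * φ t)
      (nhdsWithin 0 (Set.Ioi 0)) (nhds 0)) :
    ∀ r ∈ Set.Ioc (0:ℝ) l,
      h r ^ 2 * φ r ≤ ((m : ℝ) - 1) * h r * h' r
        + ∫ t in (0:ℝ)..r, h t ^ 2 * u'' t := by
  have hm1 : (0:ℝ) < (m:ℝ) - 1 := by
    have : (2:ℝ) ≤ (m:ℝ) := by exact_mod_cast hm
    linarith
  set g : ℝ → ℝ := fun t => h t ^ 2 * u'' t with hgdef
  have hhcont : ContinuousOn h (Set.Ici 0) := fun t ht => (hhderiv t ht).continuousWithinAt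
  have hh'c : ContinuousOn h' (Set.Ici 0) := fun t ht => (hh'deriv t ht).continuousWithinAt
  have hφcont : ContinuousOn φ (Set.Ioc 0 l) := fun t ht => (hφderiv t ht).continuousWithinAt
  have hgcont : ContinuousOn g (Set.Icc 0 l) :=
    ((hhcont.mono Set.Icc_subset_Ici_self).pow 2).mul hu''cont
  set P : ℝ → ℝ := fun t => ∫ s in (0:ℝ)..t, g s with hPdef
  have hPcont : ContinuousOn P (Set.Icc 0 l) := by
    have := intervalIntegral.continuousOn_primitive_interval
      (f := g) (μ := MeasureTheory.volume) (a := 0) (b := l)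
      (by rw [Set.uIcc_of_le hl.le]; exact hgcont.integrableOn_Icc)
    rwa [Set.uIcc_of_le hl.le] at this
  set F : ℝ → ℝ := fun t => h t ^ 2 * φ t - ((m:ℝ)-1) * h t * h' t - P t with hFdef
  -- derivative of F at interior points
  have hFderiv : ∀ t ∈ Set.Ioo (0:ℝ) l, HasDerivAt F
      (2 * h t * h' t * φ t + h t ^ 2 * φ' t
        - ((m:ℝ)-1) * (h' t * h' t + h t * h'' t) - g t) t := by
    intro t ht
    have htIci : Set.Ici (0:ℝ) ∈ nhds t := Ici_mem_nhds ht.1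
    have hh : HasDerivAt h (h' t) t := (hhderiv t ht.1.le).hasDerivAt htIci
    have hh' : HasDerivAt h' (h'' t) t := (hh'deriv t ht.1.le).hasDerivAt htIci
    have hφ : HasDerivAt φ (φ' t) t :=
      (hφderiv t ⟨ht.1, ht.2.le⟩).hasDerivAt (Ioc_mem_nhds ht.1 ht.2)
    have hgat : ContinuousAt g t :=
      hgcont.continuousAt (Icc_mem_nhds ht.1 ht.2)
    have hgint : IntervalIntegrable g MeasureTheory.volume 0 t :=
      (hgcont.mono (Set.Icc_subset_Icc le_rfl ht.2.le)).intervalIntegrable_of_Icc ht.1.le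
    have hP : HasDerivAt P (g t) t :=
      intervalIntegral.integral_hasDerivAt_right hgint
        (ContinuousAt.stronglyMeasurableAtFilter (s := Set.Ioo 0 l) isOpen_Ioo
          (fun x hx => hgcont.continuousAt (Icc_mem_nhds hx.1 hx.2)) t ht)
        hgat
    have h1 : HasDerivAt (fun t => h t ^ 2 * φ t)
        (2 * h t * h' t * φ t + h t ^ 2 * φ' t) t := by
      have : HasDerivAt (fun t => h t ^ 2 * φ t)
          (((2:ℕ):ℝ) * h t ^ (2 - 1) * h' t * φ t + h t ^ 2 * φ' t) t := ((hh.pow 2).mul hφ)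
      convert this using 1; ring
    have h2 : HasDerivAt (fun t => ((m:ℝ)-1) * h t * h' t)
        (((m:ℝ)-1) * (h' t * h' t + h t * h'' t)) t := by
      have : HasDerivAt (fun t => ((m:ℝ)-1) * h t * h' t)
          (((m:ℝ)-1) * h' t * h' t + ((m:ℝ)-1) * h t * h'' t) t :=
        ((hh.const_mul ((m:ℝ)-1)).mul hh')
      convert this using 1; ring
    exact (h1.sub h2).sub hP
  -- F' ≤ 0 on interior
  have hFd_nonpos : ∀ t ∈ Set.Ioo (0:ℝ) l,
      2 * h t * h' t * φ t + h t ^ 2 * φ' t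
        - ((m:ℝ)-1) * (h' t * h' t + h t * h'' t) - g t ≤ 0 := by
    intro t ht
    have hR := hRiccati t ⟨ht.1, ht.2.le⟩
    have hodet := hode t ht.1.le
    have hdiv : φ t ^ 2 / ((m:ℝ)-1) * ((m:ℝ)-1) = φ t ^ 2 :=
      div_mul_cancel₀ _ (ne_of_gt hm1)
    have hR' : φ' t * ((m:ℝ)-1) + φ t ^ 2 ≤ (((m:ℝ)-1) * G t + u'' t) * ((m:ℝ)-1) := by
      have := mul_le_mul_of_nonneg_right hR hm1.le
      nlinarith [this]
    have hsq : 0 ≤ (h t * φ t - ((m:ℝ)-1) * h' t) ^ 2 := sq_nonneg _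
    have hmul : h t ^ 2 * (φ' t * ((m:ℝ)-1) + φ t ^ 2)
        ≤ h t ^ 2 * ((((m:ℝ)-1) * G t + u'' t) * ((m:ℝ)-1)) :=
      mul_le_mul_of_nonneg_left hR' (sq_nonneg _)
    have key : ((m:ℝ)-1) * (2 * h t * h' t * φ t + h t ^ 2 * φ' t
        - ((m:ℝ)-1) * (h' t * h' t + h t * (G t * h t)) - h t ^ 2 * u'' t) ≤ ((m:ℝ)-1) * 0 := by
      rw [mul_zero]; nlinarith [hsq, hmul]
    have := le_of_mul_le_mul_left key hm1
    simp only [hgdef]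
    rw [hodet]
    linarith
  -- F is antitone on Ioc 0 l
  have hFcont : ContinuousOn F (Set.Ioc 0 l) := by
    have h1 : ContinuousOn h (Set.Ioc 0 l) := hhcont.mono (fun x hx => hx.1.le)
    have h2 : ContinuousOn h' (Set.Ioc 0 l) := hh'c.mono (fun x hx => hx.1.le)
    have h3 : ContinuousOn P (Set.Ioc 0 l) := hPcont.mono Set.Ioc_subset_Icc_self
    exact (((h1.pow 2).mul hφcont).sub ((continuousOn_const.mul h1).mul h2)).sub h3
  have hanti : AntitoneOn F (Set.Ioc 0 l) := by
    apply antitoneOn_of_deriv_nonpos (convex_Ioc 0 l) hFcont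
    · intro x hx
      rw [interior_Ioc] at hx
      exact (hFderiv x hx).differentiableAt.differentiableWithinAt
    · intro x hx
      rw [interior_Ioc] at hx
      rw [(hFderiv x hx).deriv]
      exact hFd_nonpos x hx
  -- limit of F at 0⁺
  have hFlim : Filter.Tendsto F (nhdsWithin 0 (Set.Ioi 0)) (nhds 0) := by
    have hle : nhdsWithin (0:ℝ) (Set.Ioi 0) ≤ nhdsWithin 0 (Set.Ici 0) :=
      nhdsWithin_mono _ Set.Ioi_subset_Ici_self
    have hth : Filter.Tendsto h (nhdsWithin (0:ℝ) (Set.Ioi 0)) (nhds 0) := by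
      have := (hhcont 0 Set.self_mem_Ici).tendsto
      rw [hh0] at this
      exact this.mono_left hle
    have hth' : Filter.Tendsto h' (nhdsWithin (0:ℝ) (Set.Ioi 0)) (nhds 1) := by
      have := (hh'c 0 Set.self_mem_Ici).tendsto
      rw [hh'0] at this
      exact this.mono_left hle
    have ht2 : Filter.Tendsto (fun t => ((m:ℝ)-1) * h t * h' t)
        (nhdsWithin (0:ℝ) (Set.Ioi 0)) (nhds 0) := by
      have := ((hth.const_mul ((m:ℝ)-1)).mul hth')
      simpa using this
    have hPlim : Filter.Tendsto P (nhdsWithin (0:ℝ) (Set.Ioi 0)) (nhds 0) := by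
      have h0 : P 0 = 0 := intervalIntegral.integral_same
      have hPl : Filter.Tendsto P (nhdsWithin (0:ℝ) (Set.Icc 0 l)) (nhds 0) := by
        have := (hPcont 0 (Set.left_mem_Icc.2 hl.le)).tendsto
        rwa [h0] at this
      have hkey : nhdsWithin (0:ℝ) (Set.Ioi 0) ≤ nhdsWithin 0 (Set.Icc 0 l) := by
        have hmem : Set.Iic l ∈ nhdsWithin (0:ℝ) (Set.Ioi 0) :=
          Filter.mem_of_superset (nhdsWithin_le_nhds (Iio_mem_nhds hl)) Set.Iio_subset_Iic_self
        have : nhdsWithin (0:ℝ) (Set.Ioi 0 ∩ Set.Iic l) = nhdsWithin 0 (Set.Ioi 0) :=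
          nhdsWithin_inter_of_mem' hmem
        rw [← this]
        exact nhdsWithin_mono _ (fun x hx => ⟨hx.1.le, hx.2⟩)
      exact hPl.mono_left hkey
    have := (hlim.sub ht2).sub hPlim
    simpa using this
  -- conclude
  intro r hr
  have hFr : F r ≤ 0 := by
    refine ge_of_tendsto hFlim ?_
    filter_upwards [Ioc_mem_nhdsGT hr.1] with s hs
    exact hanti ⟨hs.1, hs.2.trans hr.2⟩ hr hs.2
  have : h r ^ 2 * φ r - ((m:ℝ)-1) * h r * h' r - P r ≤ 0 := hFr
  simp only [hPdef, hgdef] at this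
  linarith
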